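/- With A, V_k, and the Krylov subspace V_k^s = K_k(AᵀA, Aᵀb) as below, the sine of the largest canonical angle satisfies ‖sin Θ(V_k, V_k^s)‖ = ‖Δ_k‖/√(1 + ‖Δ_k‖²) where Δ_k = D₂ T_{k2} T_{k1}^{-1} D₁^{-1}. -/

import Mathlib

open Matrix

/-- Spectral (operator 2-) norm of a real matrix. -/
noncomputable def specNorm {m n : ℕ} (M : Matrix (Fin m) (Fin n) ℝ) : ℝ :=
  ‖LinearMap.toContinuousLinearMap (Matrix.toEuclideanLin M)‖


open ContinuousLinearMap in
theorem sin_key {E F G : Type*} [NormedAddCommGroup E] [NormedSpace ℝ E]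
    [NormedAddCommGroup F] [NormedSpace ℝ F] [NormedAddCommGroup G] [NormedSpace ℝ G]
    (S : E →L[ℝ] F) (C : G →L[ℝ] E) (Δ : G →L[ℝ] F)
    (hsurj : Function.Surjective C)
    (hcomp : ∀ y, Δ y = S (C y))
    (hnorm : ∀ y, ‖C y‖ ^ 2 = ‖y‖ ^ 2 + ‖Δ y‖ ^ 2) :
    ‖S‖ = ‖Δ‖ / Real.sqrt (1 + ‖Δ‖ ^ 2) := by
  set a := ‖Δ‖ with ha
  have ha0 : 0 ≤ a := norm_nonneg _
  set s := Real.sqrt (1 + a ^ 2) with hs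
  have hs0 : 0 < s := Real.sqrt_pos.2 (by positivity)
  have hs2 : s ^ 2 = 1 + a ^ 2 := Real.sq_sqrt (by positivity)
  have h1 : ‖S‖ ≤ a / s := by
    apply opNorm_le_bound _ (by positivity)
    intro x
    obtain ⟨y, rfl⟩ := hsurj x
    rw [← hcomp]
    have hΔy : ‖Δ y‖ ≤ a * ‖y‖ := Δ.le_opNorm y
    have hCy : ‖C y‖ ^ 2 = ‖y‖ ^ 2 + ‖Δ y‖ ^ 2 := hnorm y
    rw [div_mul_eq_mul_div, le_div_iff₀ hs0]
    have h2 : (‖Δ y‖ * s) ^ 2 ≤ (a * ‖C y‖) ^ 2 := by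
      have : ‖Δ y‖ ^ 2 ≤ a ^ 2 * ‖y‖ ^ 2 := by
        nlinarith [norm_nonneg (Δ y), norm_nonneg y]
      nlinarith [hCy, hs2]
    nlinarith [mul_nonneg (norm_nonneg (Δ y)) hs0.le,
      mul_nonneg ha0 (norm_nonneg (C y))]
  have h2 : a / s ≤ ‖S‖ := by
    set t := ‖S‖ with hT
    have ht0 : 0 ≤ t := norm_nonneg _
    have ht1 : t ^ 2 ≤ (a / s) ^ 2 := by
      apply pow_le_pow_left₀ ht0 h1
    have hts : (a / s) ^ 2 = a ^ 2 / (1 + a ^ 2) := by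
      rw [div_pow, hs2]
    have htlt : t ^ 2 < 1 := by
      rw [hts] at ht1
      have : a ^ 2 / (1 + a ^ 2) < 1 := by
        rw [div_lt_one (by positivity)]; linarith
      linarith
    have h1t : 0 < 1 - t ^ 2 := by linarith
    have hΔb : ∀ y : G, ‖Δ y‖ ^ 2 * (1 - t ^ 2) ≤ t ^ 2 * ‖y‖ ^ 2 := by
      intro y
      have h3 : ‖Δ y‖ ≤ t * ‖C y‖ := by rw [hcomp y]; exact S.le_opNorm _
      have h4 : ‖Δ y‖ ^ 2 ≤ t ^ 2 * ‖C y‖ ^ 2 := by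
        nlinarith [norm_nonneg (Δ y), norm_nonneg (C y)]
      nlinarith [hnorm y]
    set u := t / Real.sqrt (1 - t ^ 2) with hu
    have hsq : Real.sqrt (1 - t ^ 2) ^ 2 = 1 - t ^ 2 := Real.sq_sqrt h1t.le
    have hsqp : 0 < Real.sqrt (1 - t ^ 2) := Real.sqrt_pos.2 h1t
    have hau : a ≤ u := by
      apply opNorm_le_bound _ (by positivity)
      intro y
      have := hΔb y
      rw [hu, div_mul_eq_mul_div, le_div_iff₀ hsqp]
      nlinarith [norm_nonneg (Δ y), norm_nonneg y, ht0,
        mul_nonneg (norm_nonneg (Δ y)) hsqp.le, mul_nonneg ht0 (norm_nonneg y)]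
    have hau2 : a ^ 2 ≤ u ^ 2 := pow_le_pow_left₀ ha0 hau 2
    have hu2 : u ^ 2 = t ^ 2 / (1 - t ^ 2) := by rw [hu, div_pow, hsq]
    have key : a ^ 2 * (1 - t ^ 2) ≤ t ^ 2 := by
      rw [hu2] at hau2
      have := (le_div_iff₀ h1t).1 hau2
      linarith
    rw [div_le_iff₀ hs0]
    nlinarith [mul_nonneg ht0 hs0.le, hs2]
  exact le_antisymm h1 h2

/-- squared Euclidean norm as dot product -/
lemma eucl_normsq {a : ℕ} (v : Fin a → ℝ) :
    ‖(WithLp.equiv 2 (Fin a → ℝ)).symm v‖ ^ 2 = v ⬝ᵥ v := by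
  rw [EuclideanSpace.norm_eq, Real.sq_sqrt (by positivity)]
  simp [dotProduct, sq, Real.norm_eq_abs, abs_mul_abs_self]

lemma dp_self {a c : ℕ} (M : Matrix (Fin a) (Fin c) ℝ) (x : Fin c → ℝ) :
    (M *ᵥ x) ⬝ᵥ (M *ᵥ x) = x ⬝ᵥ ((Mᵀ * M) *ᵥ x) := by
  rw [← Matrix.mulVec_mulVec, Matrix.dotProduct_mulVec x, Matrix.vecMul_transpose]

set_option maxHeartbeats 1600000 in
/-- with `A = U [Σ;0] Vᵀ` (`n = k + r`, distinct positive singular values,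
`u_iᵀ b ≠ 0` for all `i`), `V_k` the span of the first `k` right singular vectors and
`V_k^s = K_k(AᵀA, Aᵀb)`, the sine of the largest canonical angle satisfies
`‖sin Θ(V_k, V_k^s)‖ = ‖Δ_k‖/√(1 + ‖Δ_k‖²)` where `Δ_k = D₂ T_{k2} T_{k1}⁻¹ D₁⁻¹`:
for any matrix `W` with orthonormal columns spanning the Krylov subspace,
`‖(V_k^⊥)ᵀ W‖ = ‖Δ‖/√(1 + ‖Δ‖²)`. -/
theorem sin_theta_krylov (m k r : ℕ) (hmn : k + r ≤ m)
    (A : Matrix (Fin m) (Fin (k + r)) ℝ)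
    (U : Matrix (Fin m) (Fin m) ℝ) (hU : U.transpose * U = 1) (hU' : U * U.transpose = 1)
    (V : Matrix (Fin (k + r)) (Fin (k + r)) ℝ)
    (hV : V.transpose * V = 1) (hV' : V * V.transpose = 1)
    (σ : Fin (k + r) → ℝ) (hσpos : ∀ i, 0 < σ i) (hσanti : StrictAnti σ)
    (hA : A = U * (Matrix.of fun (i : Fin m) (j : Fin (k + r)) =>
      if (i : ℕ) = (j : ℕ) then σ j else 0) * V.transpose)
    (b : Fin m → ℝ)
    (d : Fin (k + r) → ℝ) (hd : d = fun i => ∑ row, U row (Fin.castLE hmn i) * b row)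
    (hb : ∀ i, d i ≠ 0)
    (D₁ : Matrix (Fin k) (Fin k) ℝ)
    (hD₁ : D₁ = Matrix.diagonal fun j => σ (Fin.castAdd r j) * d (Fin.castAdd r j))
    (D₂ : Matrix (Fin r) (Fin r) ℝ)
    (hD₂ : D₂ = Matrix.diagonal fun i => σ (Fin.natAdd k i) * d (Fin.natAdd k i))
    (T₁ : Matrix (Fin k) (Fin k) ℝ)
    (hT₁ : T₁ = Matrix.of fun i (j : Fin k) => (σ (Fin.castAdd r i) ^ 2) ^ (j : ℕ))
    (T₂ : Matrix (Fin r) (Fin k) ℝ)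
    (hT₂ : T₂ = Matrix.of fun i (j : Fin k) => (σ (Fin.natAdd k i) ^ 2) ^ (j : ℕ))
    (Δ : Matrix (Fin r) (Fin k) ℝ) (hΔ : Δ = D₂ * T₂ * T₁⁻¹ * D₁⁻¹)
    (Vkperp : Matrix (Fin (k + r)) (Fin r) ℝ)
    (hVkperp : Vkperp = Matrix.of fun i j => V i (Fin.natAdd k j))
    (W : Matrix (Fin (k + r)) (Fin k) ℝ) (hW : W.transpose * W = 1)
    (hWspan : Submodule.span ℝ (Set.range fun j : Fin k => W.transpose j) =
      Submodule.span ℝ (Set.range fun i : Fin k =>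
        ((A.transpose * A) ^ (i : ℕ)) *ᵥ (A.transpose *ᵥ b))) :
    specNorm (Vkperp.transpose * W) = specNorm Δ / Real.sqrt (1 + specNorm Δ ^ 2) := by
  -- notation
  set Sg : Matrix (Fin m) (Fin (k + r)) ℝ :=
    Matrix.of fun (i : Fin m) (j : Fin (k + r)) => if (i : ℕ) = (j : ℕ) then σ j else 0 with hSg
  -- Sgᵀ Sg = diagonal σ²
  have hSS : Sgᵀ * Sg = Matrix.diagonal (fun i => σ i ^ 2) := by
    ext j j'
    simp only [Matrix.mul_apply, Matrix.transpose_apply, hSg, Matrix.of_apply]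
    rcases eq_or_ne j j' with rfl | hne
    · rw [Finset.sum_eq_single (Fin.castLE hmn j)]
      · simp [sq]
      · intro i _ hi
        have : (i : ℕ) ≠ (j : ℕ) := by
          intro hc; exact hi (Fin.ext (by simpa using hc))
        simp [this]
      · simp
    · rw [Finset.sum_eq_zero, Matrix.diagonal_apply_ne _ hne]
      intro i _
      by_cases h1 : (i : ℕ) = (j : ℕ)
      · have h2 : (i : ℕ) ≠ (j' : ℕ) := by
          intro hc; exact hne (Fin.ext (h1 ▸ hc))
        simp [h2]
      · simp [h1]
  -- AᵀA
  have hAtA : Aᵀ * A = V * Matrix.diagonal (fun i => σ i ^ 2) * Vᵀ := by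
    rw [hA]
    calc (U * Sg * Vᵀ)ᵀ * (U * Sg * Vᵀ)
        = V * (Sgᵀ * ((Uᵀ * U) * Sg)) * Vᵀ := by
          simp only [Matrix.transpose_mul, Matrix.transpose_transpose]
          simp only [Matrix.mul_assoc]
      _ = V * Matrix.diagonal (fun i => σ i ^ 2) * Vᵀ := by rw [hU, Matrix.one_mul, hSS, Matrix.mul_assoc]
  -- Aᵀ b
  have hSgUb : Sgᵀ *ᵥ (Uᵀ *ᵥ b) = fun j => σ j * d j := by
    funext j
    simp only [Matrix.mulVec, dotProduct, Matrix.transpose_apply, hSg, Matrix.of_apply]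
    rw [Finset.sum_eq_single (Fin.castLE hmn j)]
    · simp [hd, mul_comm]
    · intro i _ hi
      have : (i : ℕ) ≠ (j : ℕ) := by
        intro hc; exact hi (Fin.ext (by simpa using hc))
      simp [this]
    · simp
  have hAtb : Aᵀ *ᵥ b = V *ᵥ (fun i => σ i * d i) := by
    rw [hA]
    simp only [Matrix.transpose_mul, Matrix.transpose_transpose]
    rw [← Matrix.mulVec_mulVec, ← Matrix.mulVec_mulVec, hSgUb]
  -- powers
  have hpow : ∀ p : ℕ, (Aᵀ * A) ^ p = V * Matrix.diagonal (fun i => (σ i ^ 2) ^ p) * Vᵀ := by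
    intro p
    induction p with
    | zero => simp [hV']
    | succ p ih =>
      have hdd : Matrix.diagonal (fun i => (σ i ^ 2) ^ p) * Matrix.diagonal (fun i => σ i ^ 2)
          = Matrix.diagonal (fun i => (σ i ^ 2) ^ (p + 1)) := by
        rw [Matrix.diagonal_mul_diagonal]
        simp only [← pow_succ]
      rw [pow_succ, ih, hAtA]
      calc V * Matrix.diagonal (fun i => (σ i ^ 2) ^ p) * Vᵀ *
            (V * Matrix.diagonal (fun i => σ i ^ 2) * Vᵀ)
          = V * (Matrix.diagonal (fun i => (σ i ^ 2) ^ p) * ((Vᵀ * V) *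
              (Matrix.diagonal (fun i => σ i ^ 2) * Vᵀ))) := by simp only [Matrix.mul_assoc]
        _ = V * (Matrix.diagonal (fun i => (σ i ^ 2) ^ p) *
              (Matrix.diagonal (fun i => σ i ^ 2) * Vᵀ)) := by rw [hV, Matrix.one_mul]
        _ = _ := by rw [← Matrix.mul_assoc (Matrix.diagonal _), hdd, Matrix.mul_assoc]
  -- Krylov vectors
  have hKry : ∀ p : ℕ, ((Aᵀ * A) ^ p) *ᵥ (Aᵀ *ᵥ b) =
      V *ᵥ (fun i => σ i * d i * (σ i ^ 2) ^ p) := by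
    intro p
    rw [hpow p, hAtb, Matrix.mulVec_mulVec, Matrix.mul_assoc, Matrix.mul_assoc, hV,
      Matrix.mul_one]
    have h5 : (V * Matrix.diagonal fun i => (σ i ^ 2) ^ p) *ᵥ (fun i => σ i * d i)
        = V *ᵥ (Matrix.diagonal (fun i => (σ i ^ 2) ^ p) *ᵥ (fun i => σ i * d i)) :=
      (Matrix.mulVec_mulVec _ _ _).symm
    have h6 : (Matrix.diagonal (fun i => (σ i ^ 2) ^ p) *ᵥ (fun i => σ i * d i))
        = fun i => σ i * d i * (σ i ^ 2) ^ p := by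
      funext i
      rw [Matrix.mulVec_diagonal]
      ring
    rw [h5, h6]
  -- the Krylov matrix in V-coordinates
  set M : Matrix (Fin (k + r)) (Fin k) ℝ :=
    Matrix.of (fun i (j : Fin k) => σ i * d i * (σ i ^ 2) ^ (j : ℕ)) with hM
  have hKcol : ∀ j : Fin k, ((Aᵀ * A) ^ (j : ℕ)) *ᵥ (Aᵀ *ᵥ b) = (V * M)ᵀ j := by
    intro j
    rw [hKry]
    funext i
    rw [Matrix.transpose_apply, Matrix.mul_apply]
    rfl
  -- invertibility of T₁ and D₁
  have hT₁van : T₁ = Matrix.vandermonde (fun i : Fin k => σ (Fin.castAdd r i) ^ 2) := by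
    rw [hT₁]; rfl
  have hinjσ : Function.Injective (fun i : Fin k => σ (Fin.castAdd r i) ^ 2) := by
    have hanti : StrictAnti (fun i : Fin k => σ (Fin.castAdd r i) ^ 2) := by
      intro i j hij
      have h1 : (Fin.castAdd r i : Fin (k+r)) < Fin.castAdd r j := by
        rw [Fin.lt_def, Fin.coe_castAdd, Fin.coe_castAdd]
        exact hij
      have h2 := hσanti h1
      have := hσpos (Fin.castAdd r j)
      have := hσpos (Fin.castAdd r i)
      dsimp only
      nlinarith
    exact hanti.injective
  have hT₁det : T₁.det ≠ 0 := by
    rw [hT₁van]; exact Matrix.det_vandermonde_ne_zero_iff.2 hinjσ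
  have hT₁unit : IsUnit T₁.det := isUnit_iff_ne_zero.2 hT₁det
  have hD₁det : IsUnit D₁.det := by
    rw [hD₁, Matrix.det_diagonal]
    exact isUnit_iff_ne_zero.2 (Finset.prod_ne_zero_iff.2 fun j _ =>
      mul_ne_zero (hσpos _).ne' (hb _))
  have hT₁i : T₁ * T₁⁻¹ = 1 := Matrix.mul_nonsing_inv _ hT₁unit
  have hD₁i : D₁ * D₁⁻¹ = 1 := Matrix.mul_nonsing_inv _ hD₁det
  -- G and N
  set G : Matrix (Fin k) (Fin k) ℝ := T₁⁻¹ * D₁⁻¹ with hG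
  set N : Matrix (Fin (k + r)) (Fin k) ℝ := M * G with hN
  have hMtop : ∀ (i : Fin k) (t : Fin k), M (Fin.castAdd r i) t = (D₁ * T₁) i t := by
    intro i t
    rw [hD₁, hT₁, Matrix.diagonal_mul]
    simp [hM]
  have hMbot : ∀ (i : Fin r) (t : Fin k), M (Fin.natAdd k i) t = (D₂ * T₂) i t := by
    intro i t
    rw [hD₂, hT₂, Matrix.diagonal_mul]
    simp [hM]
  have hDTG : D₁ * T₁ * G = 1 := by
    rw [hG, Matrix.mul_assoc, ← Matrix.mul_assoc T₁, hT₁i, Matrix.one_mul, hD₁i]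
  have hNtop : ∀ (i : Fin k) (j : Fin k),
      N (Fin.castAdd r i) j = (1 : Matrix (Fin k) (Fin k) ℝ) i j := by
    intro i j
    rw [← hDTG]
    show (M * G) (Fin.castAdd r i) j = (D₁ * T₁ * G) i j
    rw [Matrix.mul_apply, Matrix.mul_apply]
    exact Finset.sum_congr rfl fun t _ => by rw [hMtop]
  have hNbot : ∀ (i : Fin r) (j : Fin k), N (Fin.natAdd k i) j = Δ i j := by
    intro i j
    have hΔ' : Δ = D₂ * T₂ * G := by rw [hΔ, hG, Matrix.mul_assoc]
    rw [hΔ']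
    show (M * G) (Fin.natAdd k i) j = (D₂ * T₂ * G) i j
    rw [Matrix.mul_apply, Matrix.mul_apply]
    exact Finset.sum_congr rfl fun t _ => by rw [hMbot]
  -- Y and span equality
  set Y : Matrix (Fin (k + r)) (Fin k) ℝ := V * N with hY
  have hYVM : Y = (V * M) * G := by rw [hY, hN, Matrix.mul_assoc]
  have hGDT : G * (D₁ * T₁) = 1 := by
    rw [hG]
    calc T₁⁻¹ * D₁⁻¹ * (D₁ * T₁) = T₁⁻¹ * ((D₁⁻¹ * D₁) * T₁) := by
          simp only [Matrix.mul_assoc]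
      _ = 1 := by
          rw [Matrix.nonsing_inv_mul _ hD₁det, Matrix.one_mul,
            Matrix.nonsing_inv_mul _ hT₁unit]
  have hGsurj : Function.Surjective G.mulVecLin := by
    intro v
    refine ⟨(D₁ * T₁) *ᵥ v, ?_⟩
    simp only [Matrix.mulVecLin_apply, Matrix.mulVec_mulVec]
    rw [hGDT, Matrix.one_mulVec]
  have hspanY : Submodule.span ℝ (Set.range Yᵀ) = Submodule.span ℝ (Set.range Wᵀ) := by
    have e1 : Submodule.span ℝ (Set.range Wᵀ) = Submodule.span ℝ (Set.range (V * M)ᵀ) := by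
      rw [hWspan]
      congr 1
      exact congrArg Set.range (funext hKcol)
    have e2 : Submodule.span ℝ (Set.range Yᵀ) = Submodule.span ℝ (Set.range (V * M)ᵀ) := by
      change Submodule.span ℝ (Set.range Y.col) = Submodule.span ℝ (Set.range (V * M).col)
      rw [← Matrix.range_mulVecLin, ← Matrix.range_mulVecLin, hYVM, Matrix.mulVecLin_mul,
        LinearMap.range_comp_of_range_eq_top _ (LinearMap.range_eq_top.2 hGsurj)]
    rw [e2, e1]
  -- W Wᵀ Y = Y
  have hWWY : W * (Wᵀ * Y) = Y := by
    have hcol : ∀ j : Fin k, ∃ c, (fun i => Y i j) = W *ᵥ c := by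
      intro j
      have hmem : Yᵀ j ∈ Submodule.span ℝ (Set.range Wᵀ) := by
        rw [← hspanY]
        exact Submodule.subset_span ⟨j, rfl⟩
      change Yᵀ j ∈ Submodule.span ℝ (Set.range W.col) at hmem
      rw [← Matrix.range_mulVecLin] at hmem
      obtain ⟨c, hc⟩ := hmem
      refine ⟨c, ?_⟩
      have hc2 := hc.symm
      rw [Matrix.mulVecLin_apply] at hc2
      exact hc2
    ext i j
    obtain ⟨c, hc⟩ := hcol j
    calc (W * (Wᵀ * Y)) i j = ((W * Wᵀ) * Y) i j := by rw [Matrix.mul_assoc]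
      _ = ((W * Wᵀ) *ᵥ fun t => Y t j) i := by rw [Matrix.mul_apply]; rfl
      _ = ((W * Wᵀ) *ᵥ (W *ᵥ c)) i := by rw [← hc]
      _ = ((W * (Wᵀ * W)) *ᵥ c) i := by
          rw [Matrix.mulVec_mulVec, Matrix.mul_assoc]
      _ = (W *ᵥ c) i := by rw [hW, Matrix.mul_one]
      _ = Y i j := by rw [← hc]
  -- C and identities
  set C : Matrix (Fin k) (Fin k) ℝ := Wᵀ * Y with hC
  have hYWC : Y = W * C := hWWY.symm
  have hYtY : Yᵀ * Y = 1 + Δᵀ * Δ := by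
    have e1 : Yᵀ * Y = Nᵀ * N := by
      rw [hY, Matrix.transpose_mul]
      calc Nᵀ * Vᵀ * (V * N) = Nᵀ * ((Vᵀ * V) * N) := by simp only [Matrix.mul_assoc]
        _ = Nᵀ * N := by rw [hV, Matrix.one_mul]
    rw [e1]
    ext j j'
    rw [Matrix.mul_apply]
    simp only [Matrix.transpose_apply]
    rw [Fin.sum_univ_add (f := fun i : Fin (k + r) => N i j * N i j')]
    have e2 : ∀ t : Fin k, N (Fin.castAdd r t) j * N (Fin.castAdd r t) j'
        = (1 : Matrix (Fin k) (Fin k) ℝ) t j * (1 : Matrix (Fin k) (Fin k) ℝ) t j' := by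
      intro t; rw [hNtop, hNtop]
    have e3 : ∀ t : Fin r, N (Fin.natAdd k t) j * N (Fin.natAdd k t) j' = Δ t j * Δ t j' := by
      intro t; rw [hNbot, hNbot]
    rw [Finset.sum_congr rfl (fun t _ => e2 t), Finset.sum_congr rfl (fun t _ => e3 t)]
    have e4 : ∑ t : Fin k, (1 : Matrix (Fin k) (Fin k) ℝ) t j * (1 : Matrix (Fin k) (Fin k) ℝ) t j'
        = (1 : Matrix (Fin k) (Fin k) ℝ) j j' := by
      rcases eq_or_ne j j' with rfl | hne
      · rw [Finset.sum_eq_single j]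
        · rw [Matrix.one_apply_eq, one_mul]
        · intro t _ ht; rw [Matrix.one_apply_ne ht, zero_mul]
        · intro h; exact absurd (Finset.mem_univ _) h
      · rw [Matrix.one_apply_ne hne, Finset.sum_eq_zero]
        intro t _
        rcases eq_or_ne t j with rfl | ht
        · rw [Matrix.one_apply_ne hne, mul_zero]
        · rw [Matrix.one_apply_ne ht, zero_mul]
    have e5 : ∑ t : Fin r, Δ t j * Δ t j' = (Δᵀ * Δ) j j' := by
      rw [Matrix.mul_apply]; rfl
    rw [e4, e5, Matrix.add_apply]
  have hCtC : Cᵀ * C = 1 + Δᵀ * Δ := by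
    have e : Cᵀ * C = Yᵀ * Y := by
      rw [hC, Matrix.transpose_mul, Matrix.transpose_transpose]
      calc Yᵀ * W * (Wᵀ * Y) = Yᵀ * (W * (Wᵀ * Y)) := by rw [Matrix.mul_assoc]
        _ = Yᵀ * Y := by rw [hWWY]
    rw [e, hYtY]
  have hVpY : Vkperpᵀ * Y = Δ := by
    ext i j
    rw [hY, ← Matrix.mul_assoc, Matrix.mul_apply]
    have e1 : ∀ l, (Vkperpᵀ * V) i l
        = (1 : Matrix (Fin (k + r)) (Fin (k + r)) ℝ) (Fin.natAdd k i) l := by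
      intro l
      rw [← hV, Matrix.mul_apply, Matrix.mul_apply]
      refine Finset.sum_congr rfl fun t _ => ?_
      rw [Matrix.transpose_apply, Matrix.transpose_apply, hVkperp]
      rfl
    rw [Finset.sum_congr rfl fun l _ => by rw [e1 l]]
    rw [Finset.sum_eq_single (Fin.natAdd k i)]
    · rw [Matrix.one_apply_eq, one_mul, hNbot]
    · intro l _ hl
      rw [Matrix.one_apply_ne (Ne.symm hl), zero_mul]
    · intro h; exact absurd (Finset.mem_univ _) h
  have hΔSC : Δ = (Vkperpᵀ * W) * C := by
    rw [← hVpY]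
    conv_lhs => rw [hYWC]
    rw [Matrix.mul_assoc]
  -- Euclidean conversion
  have hnormC : ∀ y : EuclideanSpace ℝ (Fin k),
      ‖Matrix.toEuclideanLin C y‖ ^ 2 = ‖y‖ ^ 2 + ‖Matrix.toEuclideanLin Δ y‖ ^ 2 := by
    intro y
    rw [Matrix.toEuclideanLin_apply, Matrix.toEuclideanLin_apply, ← WithLp.equiv_symm_apply, eucl_normsq, ← WithLp.equiv_symm_apply, eucl_normsq,
      dp_self, dp_self, hCtC]
    have hyv : ‖y‖ ^ 2
        = (WithLp.equiv 2 (Fin k → ℝ) y) ⬝ᵥ (WithLp.equiv 2 (Fin k → ℝ) y) := by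
      rw [← eucl_normsq, Equiv.symm_apply_apply]
    rw [hyv, Matrix.add_mulVec, dotProduct_add, Matrix.one_mulVec]
    rfl
  have hcompSC : ∀ y : EuclideanSpace ℝ (Fin k),
      Matrix.toEuclideanLin Δ y = Matrix.toEuclideanLin (Vkperpᵀ * W)
        (Matrix.toEuclideanLin C y) := by
    intro y
    rw [hΔSC]
    simp only [Matrix.toEuclideanLin_apply, Equiv.apply_symm_apply, Matrix.mulVec_mulVec]
  have hCinj : Function.Injective (Matrix.toEuclideanLin C) := by
    rw [← LinearMap.ker_eq_bot, LinearMap.ker_eq_bot']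
    intro y hy
    have h0 : ‖Matrix.toEuclideanLin C y‖ ^ 2 = 0 := by rw [hy]; simp
    rw [hnormC y] at h0
    have h1 : ‖y‖ = 0 := by
      nlinarith [norm_nonneg y, sq_nonneg ‖Matrix.toEuclideanLin Δ y‖, norm_nonneg y]
    exact norm_eq_zero.1 h1
  have hCsurj : Function.Surjective (Matrix.toEuclideanLin C) :=
    LinearMap.surjective_of_injective hCinj
  have hsurj' : Function.Surjective
      ⇑(LinearMap.toContinuousLinearMap (Matrix.toEuclideanLin C)) := by
    rw [LinearMap.coe_toContinuousLinearMap']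
    exact hCsurj
  have hcomp' : ∀ y, (LinearMap.toContinuousLinearMap (Matrix.toEuclideanLin Δ)) y
      = (LinearMap.toContinuousLinearMap (Matrix.toEuclideanLin (Vkperpᵀ * W)))
        ((LinearMap.toContinuousLinearMap (Matrix.toEuclideanLin C)) y) := by
    intro y
    simp only [LinearMap.coe_toContinuousLinearMap']
    exact hcompSC y
  have hnorm' : ∀ y, ‖(LinearMap.toContinuousLinearMap (Matrix.toEuclideanLin C)) y‖ ^ 2
      = ‖y‖ ^ 2 + ‖(LinearMap.toContinuousLinearMap (Matrix.toEuclideanLin Δ)) y‖ ^ 2 := by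
    intro y
    simp only [LinearMap.coe_toContinuousLinearMap']
    exact hnormC y
  exact sin_key _ _ _ hsurj' hcomp' hnorm'
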